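/- Let G be the chain graph on [n] with edges {(i,j) : |i-j| ≤ 1}, and let H ∈ S_n(G) be a tridiagonal matrix such that every 2×2 principal submatrix [[H_{ii}, H_{i,i+1}],[H_{i+1,i}, H_{i+1,i+1}]] is positive definite. Define L unit lower bidiagonal with L_{j+1,j} = -H_{j+1,j}/H_{j+1,j+1}, and D diagonal with D_{jj}⁻¹ = H_{jj} - H_{j+1,j}²/H_{j+1,j+1} for j ≤ n-1 and D_{nn}⁻¹ = H_{nn}. Then X = L D Lᵀ is positive definite, tridiagonal, and satisfies P_G(X⁻¹) = H; equivalently, X is the unique minimizer of -log det(X) + Tr(XH) over S_n(G)^{++}. -/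

import Mathlib

open Matrix

lemma aux_conjT {m : Type*} [Fintype m] (A : Matrix m m ℝ) : Aᴴ = Aᵀ := by
  ext i j; simp [conjTranspose_apply]

lemma aux_posDef_congr {n : ℕ} {A : Matrix (Fin n) (Fin n) ℝ} (hA : A.PosDef)
    (B : Matrix (Fin n) (Fin n) ℝ) (hB : IsUnit B.det) : (B * A * Bᵀ).PosDef := by
  have hsd := hA.posSemidef.mul_mul_conjTranspose_same B
  rw [aux_conjT] at hsd
  refine Matrix.PosDef.of_dotProduct_mulVec_pos hsd.1 fun x hx => ?_
  have hBT : IsUnit Bᵀ := (Matrix.isUnit_iff_isUnit_det _).2 (by rwa [Matrix.det_transpose])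
  have hBx : Bᵀ *ᵥ x ≠ 0 := by
    intro h0
    exact hx (Matrix.mulVec_injective_iff_isUnit.mpr hBT (by simpa using h0))
  have key : B * A * Bᵀ = (Bᵀ)ᴴ * A * Bᵀ := by rw [aux_conjT, transpose_transpose]
  rw [key]
  simpa only [star_mulVec, dotProduct_mulVec, vecMul_vecMul] using hA.dotProduct_mulVec_pos hBx

lemma aux_trace_band {n : ℕ} (P Q R : Matrix (Fin n) (Fin n) ℝ)
    (hP : ∀ i j : Fin n, ((i : ℕ) + 1 < (j : ℕ) ∨ (j : ℕ) + 1 < (i : ℕ)) → P i j = 0)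
    (hQR : ∀ i j : Fin n, ¬ ((i : ℕ) + 1 < (j : ℕ) ∨ (j : ℕ) + 1 < (i : ℕ)) → Q i j = R i j) :
    (P * Q).trace = (P * R).trace := by
  simp only [Matrix.trace, Matrix.diag, Matrix.mul_apply]
  refine Finset.sum_congr rfl fun i _ => Finset.sum_congr rfl fun j _ => ?_
  by_cases h : ((i : ℕ) + 1 < (j : ℕ) ∨ (j : ℕ) + 1 < (i : ℕ))
  · rw [hP i j h]; ring
  · rw [hQR j i (fun hh => h hh.symm)]

open scoped MatrixOrder in
lemma aux_logdet_lt {n : ℕ} {X Y : Matrix (Fin n) (Fin n) ℝ}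
    (hX : X.PosDef) (hY : Y.PosDef) (hne : Y ≠ X) :
    -Real.log X.det + (n : ℝ) < -Real.log Y.det + (Y * X⁻¹).trace := by
  have hW : (X⁻¹).PosDef := hX.inv
  set R := CFC.sqrt (X⁻¹) with hRdef
  have hRsd : R.PosSemidef := Matrix.nonneg_iff_posSemidef.mp (CFC.sqrt_nonneg _)
  have hRR : R * R = X⁻¹ := CFC.sqrt_mul_sqrt_self _ hW.posSemidef.nonneg
  have hRT : Rᵀ = R := by rw [← aux_conjT]; exact hRsd.1
  have hWdet : 0 < (X⁻¹).det := hW.det_pos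
  have hdetR2 : R.det * R.det = (X⁻¹).det := by rw [← Matrix.det_mul, hRR]
  have hRdet0 : R.det ≠ 0 := by intro h; rw [h, zero_mul] at hdetR2; exact hWdet.ne hdetR2
  have hRunit : IsUnit R.det := hRdet0.isUnit
  have hM : (R * Y * R).PosDef := by
    have := aux_posDef_congr hY R hRunit; rwa [hRT] at this
  set M := R * Y * R with hMdef
  set μ := hM.1.eigenvalues with hmu
  have hμpos : ∀ i, 0 < μ i := hM.eigenvalues_pos
  have htr : M.trace = ∑ i, μ i := by
    conv_lhs => rw [hM.1.spectral_theorem, Unitary.conjStarAlgAut_apply]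
    rw [Matrix.trace_mul_comm, ← Matrix.mul_assoc,
      (Matrix.mem_unitaryGroup_iff').mp (hM.1.eigenvectorUnitary).2]
    simp [Matrix.trace_diagonal]
    rfl
  have hdet : M.det = ∏ i, μ i := by simpa using hM.1.det_eq_prod_eigenvalues
  have htrM : M.trace = (Y * X⁻¹).trace := by
    rw [hMdef, Matrix.trace_mul_cycle, hRR, Matrix.trace_mul_comm]
  have hXdet : 0 < X.det := hX.det_pos
  have h1 : X.det * (X⁻¹).det = 1 := by
    rw [← Matrix.det_mul, Matrix.mul_nonsing_inv X hXdet.ne'.isUnit, Matrix.det_one]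
  have hdetinv : (X⁻¹).det = X.det⁻¹ := (inv_eq_of_mul_eq_one_right h1).symm
  have hdetM : M.det = Y.det * X.det⁻¹ := by
    rw [hMdef, Matrix.det_mul, Matrix.det_mul, ← hdetinv, ← hdetR2]; ring
  have hYdet : 0 < Y.det := hY.det_pos
  have hMne1 : M ≠ 1 := by
    intro h1
    apply hne
    have hY' : Y = R⁻¹ * (R * Y * R) * R⁻¹ := by
      rw [Matrix.mul_assoc R Y R, ← Matrix.mul_assoc R⁻¹ R _,
        Matrix.nonsing_inv_mul R hRunit, Matrix.one_mul, Matrix.mul_assoc,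
        Matrix.mul_nonsing_inv R hRunit, Matrix.mul_one]
    rw [← hMdef, h1, Matrix.mul_one] at hY'
    rw [hY', ← Matrix.mul_inv_rev, hRR, Matrix.nonsing_inv_nonsing_inv X hXdet.ne'.isUnit]
  have hlogM : Real.log M.det = Real.log Y.det - Real.log X.det := by
    rw [hdetM, Real.log_mul hYdet.ne' (inv_ne_zero hXdet.ne'), Real.log_inv]; ring
  have hsum : ∑ i, Real.log (μ i) < ∑ i, (μ i - 1) := by
    by_cases hall : ∀ i, μ i = 1
    · exfalso; apply hMne1
      conv_lhs => rw [hM.1.spectral_theorem, Unitary.conjStarAlgAut_apply]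
      have hdg : Matrix.diagonal (RCLike.ofReal ∘ hM.1.eigenvalues) = (1 : Matrix (Fin n) (Fin n) ℝ) := by
        have : hM.1.eigenvalues = fun _ => (1:ℝ) := funext hall
        simp [this, Function.comp]
      rw [hdg, Matrix.mul_one, (Matrix.mem_unitaryGroup_iff).mp (hM.1.eigenvectorUnitary).2]
    · push_neg at hall
      obtain ⟨i0, hi0⟩ := hall
      exact Finset.sum_lt_sum (fun i _ => Real.log_le_sub_one_of_pos (hμpos i))
        ⟨i0, Finset.mem_univ _, Real.log_lt_sub_one_of_pos (hμpos i0) hi0⟩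
  have hlogsum : Real.log M.det = ∑ i, Real.log (μ i) := by
    rw [hdet]; exact Real.log_prod (fun i _ => (hμpos i).ne')
  have hsum2 : ∑ i, (μ i - 1) = M.trace - n := by
    rw [htr, Finset.sum_sub_distrib]
    simp
  have final := hsum
  rw [← hlogsum, hlogM] at final
  rw [hsum2, htrM] at final
  linarith
theorem tridiag_logdet_explicit_solution {n : ℕ}
    (H : Matrix (Fin n) (Fin n) ℝ) (hsym : H.IsSymm)
    (hsp : ∀ i j : Fin n, ((i : ℕ) + 1 < (j : ℕ) ∨ (j : ℕ) + 1 < (i : ℕ)) → H i j = 0)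
    (hdiag : ∀ i, 0 < H i i)
    (h2x2 : ∀ (i : Fin n) (h : (i : ℕ) + 1 < n),
      0 < H i i * H ⟨(i : ℕ) + 1, h⟩ ⟨(i : ℕ) + 1, h⟩ - (H ⟨(i : ℕ) + 1, h⟩ i) ^ 2)
    (L Dm X : Matrix (Fin n) (Fin n) ℝ)
    (hL : ∀ i j : Fin n, L i j =
      if i = j then 1
      else if (i : ℕ) = (j : ℕ) + 1 then -(H i j) / H i i
      else 0)
    (hD : Dm = Matrix.diagonal (fun j : Fin n =>
      if h : (j : ℕ) + 1 < n then
        (H j j - (H ⟨(j : ℕ) + 1, h⟩ j) ^ 2 / H ⟨(j : ℕ) + 1, h⟩ ⟨(j : ℕ) + 1, h⟩)⁻¹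
      else (H j j)⁻¹))
    (hX : X = L * Dm * Lᵀ) :
    X.PosDef ∧
    (∀ i j : Fin n, ((i : ℕ) + 1 < (j : ℕ) ∨ (j : ℕ) + 1 < (i : ℕ)) → X i j = 0) ∧
    (∀ i j : Fin n, ¬ ((i : ℕ) + 1 < (j : ℕ) ∨ (j : ℕ) + 1 < (i : ℕ)) → X⁻¹ i j = H i j) ∧
    (∀ Y : Matrix (Fin n) (Fin n) ℝ, Y.PosDef →
      (∀ i j : Fin n, ((i : ℕ) + 1 < (j : ℕ) ∨ (j : ℕ) + 1 < (i : ℕ)) → Y i j = 0) →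
      Y ≠ X →
      -Real.log X.det + (X * H).trace < -Real.log Y.det + (Y * H).trace) := by
  set e : Fin n → ℝ := fun j =>
    if h : (j : ℕ) + 1 < n then
      H j j - (H ⟨(j : ℕ) + 1, h⟩ j) ^ 2 / H ⟨(j : ℕ) + 1, h⟩ ⟨(j : ℕ) + 1, h⟩
    else H j j with he
  have hepos : ∀ j, 0 < e j := by
    intro j
    simp only [he]
    by_cases h : (j : ℕ) + 1 < n
    · rw [dif_pos h]
      have h2 := h2x2 j h
      have hd := hdiag (⟨(j : ℕ) + 1, h⟩ : Fin n)
      rw [sub_pos, div_lt_iff₀ hd]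
      nlinarith
    · rw [dif_neg h]; exact hdiag j
  have hD' : Dm = Matrix.diagonal (fun j => (e j)⁻¹) := by
    rw [hD]
    have hfun : (fun j : Fin n =>
        if h : (j : ℕ) + 1 < n then
          (H j j - (H ⟨(j : ℕ) + 1, h⟩ j) ^ 2 / H ⟨(j : ℕ) + 1, h⟩ ⟨(j : ℕ) + 1, h⟩)⁻¹
        else (H j j)⁻¹) = fun j => (e j)⁻¹ := by
      funext j
      simp only [he]
      by_cases h : (j : ℕ) + 1 < n
      · rw [dif_pos h, dif_pos h]
      · rw [dif_neg h, dif_neg h]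
    rw [hfun]
  set E : Matrix (Fin n) (Fin n) ℝ := Matrix.diagonal e with hE
  have hDE : Dm * E = 1 := by
    rw [hD', hE, Matrix.diagonal_mul_diagonal]
    have h1 : (fun i => (e i)⁻¹ * e i) = fun _ : Fin n => (1 : ℝ) :=
      funext fun i => inv_mul_cancel₀ (hepos i).ne'
    rw [h1, Matrix.diagonal_one]
  have hLlow : ∀ i j : Fin n, i < j → L i j = 0 := by
    intro i j hij
    have hv : (i : ℕ) < (j : ℕ) := hij
    rw [hL, if_neg (Fin.ne_of_lt hij), if_neg (by omega)]
  have hLdet : L.det = 1 := by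
    rw [Matrix.det_of_lowerTriangular L (fun i j h => hLlow i j (by simpa using h))]
    exact Finset.prod_eq_one fun i _ => by rw [hL]; simp
  have hLunit : IsUnit L.det := by rw [hLdet]; exact isUnit_one
  have hDpos : Dm.PosDef := by
    rw [hD']; exact Matrix.PosDef.diagonal fun i => inv_pos.mpr (hepos i)
  have hXpd : X.PosDef := by rw [hX]; exact aux_posDef_congr hDpos L hLunit
  have hXdet : IsUnit X.det := hXpd.det_pos.ne'.isUnit
  -- bullet 2 : X is tridiagonal
  have hXband : ∀ i j : Fin n, ((i : ℕ) + 1 < (j : ℕ) ∨ (j : ℕ) + 1 < (i : ℕ)) → X i j = 0 := by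
    intro i j hij
    rw [hX, Matrix.mul_apply]
    refine Finset.sum_eq_zero fun k _ => ?_
    rw [hD', Matrix.mul_diagonal, Matrix.transpose_apply]
    by_cases h1 : L i k = 0
    · rw [h1]; ring
    by_cases h2 : L j k = 0
    · rw [h2]; ring
    exfalso
    have e1 : (i : ℕ) = (k : ℕ) ∨ (i : ℕ) = (k : ℕ) + 1 := by
      by_contra hc; push_neg at hc
      exact h1 (by rw [hL, if_neg (fun hik => hc.1 (congrArg Fin.val hik)), if_neg hc.2])
    have e2 : (j : ℕ) = (k : ℕ) ∨ (j : ℕ) = (k : ℕ) + 1 := by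
      by_contra hc; push_neg at hc
      exact h2 (by rw [hL, if_neg (fun hik => hc.1 (congrArg Fin.val hik)), if_neg hc.2])
    omega
  -- the inverse of Lᵀ
  set N : Matrix (Fin n) (Fin n) ℝ := (Lᵀ)⁻¹ with hN
  have hLTunit : IsUnit (Lᵀ).det := by rwa [Matrix.det_transpose]
  have hLN : Lᵀ * N = 1 := Matrix.mul_nonsing_inv _ hLTunit
  -- collapsing sums against columns of L
  have sum_collapse : ∀ (f : Fin n → ℝ) (j : Fin n),
      (∀ k : Fin n, k ≠ j → (k : ℕ) ≠ (j : ℕ) + 1 → f k = 0) →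
      ∑ k, f k = f j + (if h : (j : ℕ) + 1 < n then f ⟨(j : ℕ) + 1, h⟩ else 0) := by
    intro f j hf
    by_cases h : (j : ℕ) + 1 < n
    · rw [dif_pos h]
      have hne : j ≠ (⟨(j : ℕ) + 1, h⟩ : Fin n) := by
        intro hc; have := congrArg Fin.val hc; simp at this
      rw [← Finset.sum_pair hne]
      refine (Finset.sum_subset (Finset.subset_univ _) ?_).symm
      intro k _ hk
      simp only [Finset.mem_insert, Finset.mem_singleton] at hk
      push_neg at hk
      exact hf k hk.1 (fun hv => hk.2 (Fin.ext hv))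
    · rw [dif_neg h, add_zero]
      have hs : ∑ k ∈ ({j} : Finset (Fin n)), f k = ∑ k, f k := by
        refine Finset.sum_subset (Finset.subset_univ _) ?_
        intro k _ hk
        simp only [Finset.mem_singleton] at hk
        have hk2 := k.isLt
        exact hf k hk (by omega)
      rw [← hs, Finset.sum_singleton]
  -- entries of N via L^T N = 1
  have hLTN : ∀ i j : Fin n,
      N i j + (if h : (i : ℕ) + 1 < n then L ⟨(i : ℕ) + 1, h⟩ i * N ⟨(i : ℕ) + 1, h⟩ j else 0)
        = if i = j then 1 else 0 := by
    intro i j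
    have hone := congrFun (congrFun hLN i) j
    rw [Matrix.mul_apply] at hone
    rw [sum_collapse (fun k => Lᵀ i k * N k j) i (by
      intro k hk1 hk2
      have : L k i = 0 := by
        rw [hL, if_neg hk1, if_neg hk2]
      simp [Matrix.transpose_apply, this])] at hone
    have hLii : L i i = 1 := by rw [hL]; simp
    rw [Matrix.one_apply] at hone
    simpa [Matrix.transpose_apply, hLii] using hone
  have hNtri : ∀ (k : ℕ) (i : Fin n), (i : ℕ) + k + 1 = n →
      ∀ j : Fin n, j ≤ i → N i j = if j = i then 1 else 0 := by
    intro k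
    induction k with
    | zero =>
      intro i hi j hj
      have h0 := hLTN i j
      rw [dif_neg (by omega), add_zero] at h0
      rw [h0]; exact if_congr eq_comm rfl rfl
    | succ k ih =>
      intro i hi j hj
      have hjv : (j : ℕ) ≤ (i : ℕ) := hj
      have h : (i : ℕ) + 1 < n := by omega
      have hi' : ((⟨(i : ℕ) + 1, h⟩ : Fin n) : ℕ) + k + 1 = n := by
        show (i : ℕ) + 1 + k + 1 = n; omega
      have hNz : N ⟨(i : ℕ) + 1, h⟩ j = 0 := by
        rw [ih ⟨(i : ℕ) + 1, h⟩ hi' j (show (j : ℕ) ≤ (i : ℕ) + 1 by omega),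
          if_neg (Fin.ne_of_val_ne (show (j : ℕ) ≠ (i : ℕ) + 1 by omega))]
      have h0 := hLTN i j
      rw [dif_pos h, hNz, mul_zero, add_zero] at h0
      rw [h0]; exact if_congr eq_comm rfl rfl
  -- the key identity X⁻¹ * L = N * E
  have hWL : X⁻¹ * L = N * E := by
    have hXNE : X * (N * E) = L := by
      rw [hX, Matrix.mul_assoc (L * Dm) Lᵀ (N * E), ← Matrix.mul_assoc Lᵀ N E, hLN,
        Matrix.one_mul, Matrix.mul_assoc, hDE, Matrix.mul_one]
    rw [← hXNE, ← Matrix.mul_assoc, Matrix.nonsing_inv_mul X hXdet, Matrix.one_mul]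
  -- entrywise recurrence for W = X⁻¹
  have hWrec : ∀ i j : Fin n,
      X⁻¹ i j + (if h : (j : ℕ) + 1 < n then
          X⁻¹ i ⟨(j : ℕ) + 1, h⟩ * (-(H ⟨(j : ℕ) + 1, h⟩ j) / H ⟨(j : ℕ) + 1, h⟩ ⟨(j : ℕ) + 1, h⟩)
        else 0) = N i j * e j := by
    intro i j
    have h1 := congrFun (congrFun hWL i) j
    rw [Matrix.mul_apply] at h1
    rw [sum_collapse (fun k => X⁻¹ i k * L k j) j (by
      intro k hk1 hk2
      have : L k j = 0 := by
        rw [hL, if_neg hk1, if_neg hk2]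
      simp [this])] at h1
    rw [hE, Matrix.mul_diagonal] at h1
    have hLjj : L j j = 1 := by rw [hL]; simp
    have hLj1 : ∀ (h : (j : ℕ) + 1 < n),
        L ⟨(j : ℕ) + 1, h⟩ j = -(H ⟨(j : ℕ) + 1, h⟩ j) / H ⟨(j : ℕ) + 1, h⟩ ⟨(j : ℕ) + 1, h⟩ := by
      intro h
      rw [hL, if_neg (Fin.ne_of_val_ne (show (j : ℕ) + 1 ≠ (j : ℕ) by omega)),
        if_pos (show ((⟨(j : ℕ) + 1, h⟩ : Fin n) : ℕ) = (j : ℕ) + 1 from rfl)]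
    simpa [hLjj, hLj1] using h1
  -- symmetry of X⁻¹ entries
  have hWsym : ∀ i j : Fin n, X⁻¹ i j = X⁻¹ j i := by
    intro i j
    have hh := hXpd.inv.isHermitian
    have := congrFun (congrFun hh i) j
    simpa [Matrix.conjTranspose_apply] using this.symm
  -- diagonal entries of X⁻¹
  have hdiagW : ∀ (k : ℕ) (j : Fin n), (j : ℕ) + k + 1 = n → X⁻¹ j j = H j j := by
    intro k
    induction k with
    | zero =>
      intro j hj
      have h0 := hWrec j j
      rw [dif_neg (by omega), add_zero] at h0
      have hNjj : N j j = 1 := by rw [hNtri 0 j (by omega) j le_rfl]; simp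
      have hej : e j = H j j := by simp only [he]; rw [dif_neg (by omega)]
      rw [hNjj, one_mul, hej] at h0
      exact h0
    | succ k ih =>
      intro j hj
      have h : (j : ℕ) + 1 < n := by omega
      have hj' : ((⟨(j : ℕ) + 1, h⟩ : Fin n) : ℕ) + k + 1 = n := by
        show (j : ℕ) + 1 + k + 1 = n; omega
      have hWd' : X⁻¹ ⟨(j : ℕ) + 1, h⟩ ⟨(j : ℕ) + 1, h⟩ = H ⟨(j : ℕ) + 1, h⟩ ⟨(j : ℕ) + 1, h⟩ :=
        ih _ hj'
      have hrec := hWrec ⟨(j : ℕ) + 1, h⟩ j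
      rw [dif_pos h] at hrec
      have hNz : N ⟨(j : ℕ) + 1, h⟩ j = 0 := by
        rw [hNtri k ⟨(j : ℕ) + 1, h⟩ hj' j (show (j : ℕ) ≤ (j : ℕ) + 1 by omega),
          if_neg (Fin.ne_of_val_ne (show (j : ℕ) ≠ (j : ℕ) + 1 by omega))]
      rw [hNz, zero_mul, hWd'] at hrec
      have hd0 : H ⟨(j : ℕ) + 1, h⟩ ⟨(j : ℕ) + 1, h⟩ ≠ 0 := (hdiag _).ne'
      have hcan : H ⟨(j : ℕ) + 1, h⟩ ⟨(j : ℕ) + 1, h⟩ *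
          (-(H ⟨(j : ℕ) + 1, h⟩ j) / H ⟨(j : ℕ) + 1, h⟩ ⟨(j : ℕ) + 1, h⟩)
          = -(H ⟨(j : ℕ) + 1, h⟩ j) := by
        rw [mul_comm]; exact div_mul_cancel₀ _ hd0
      rw [hcan] at hrec
      have hoff : X⁻¹ ⟨(j : ℕ) + 1, h⟩ j = H ⟨(j : ℕ) + 1, h⟩ j := by linarith
      have hrec2 := hWrec j j
      rw [dif_pos h, hWsym j ⟨(j : ℕ) + 1, h⟩, hoff] at hrec2
      have hNjj : N j j = 1 := by rw [hNtri (k + 1) j hj j le_rfl]; simp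
      have hej : e j = H j j - (H ⟨(j : ℕ) + 1, h⟩ j) ^ 2 / H ⟨(j : ℕ) + 1, h⟩ ⟨(j : ℕ) + 1, h⟩ := by
        simp only [he]; rw [dif_pos h]
      rw [hNjj, one_mul, hej] at hrec2
      have hcan2 : H ⟨(j : ℕ) + 1, h⟩ j *
          (-(H ⟨(j : ℕ) + 1, h⟩ j) / H ⟨(j : ℕ) + 1, h⟩ ⟨(j : ℕ) + 1, h⟩)
          = -((H ⟨(j : ℕ) + 1, h⟩ j) ^ 2 / H ⟨(j : ℕ) + 1, h⟩ ⟨(j : ℕ) + 1, h⟩) := by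
        ring
      rw [hcan2] at hrec2
      linarith
  -- off-diagonal (sub-diagonal) entries of X⁻¹
  have hoffW : ∀ (j : Fin n) (h : (j : ℕ) + 1 < n),
      X⁻¹ ⟨(j : ℕ) + 1, h⟩ j = H ⟨(j : ℕ) + 1, h⟩ j := by
    intro j h
    have hj' : ((⟨(j : ℕ) + 1, h⟩ : Fin n) : ℕ) + (n - (j : ℕ) - 2) + 1 = n := by
      show (j : ℕ) + 1 + (n - (j : ℕ) - 2) + 1 = n; omega
    have hWd' : X⁻¹ ⟨(j : ℕ) + 1, h⟩ ⟨(j : ℕ) + 1, h⟩ = H ⟨(j : ℕ) + 1, h⟩ ⟨(j : ℕ) + 1, h⟩ :=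
      hdiagW _ _ hj'
    have hrec := hWrec ⟨(j : ℕ) + 1, h⟩ j
    rw [dif_pos h] at hrec
    have hNz : N ⟨(j : ℕ) + 1, h⟩ j = 0 := by
      rw [hNtri (n - (j : ℕ) - 2) ⟨(j : ℕ) + 1, h⟩ hj' j (show (j : ℕ) ≤ (j : ℕ) + 1 by omega),
        if_neg (Fin.ne_of_val_ne (show (j : ℕ) ≠ (j : ℕ) + 1 by omega))]
    rw [hNz, zero_mul, hWd'] at hrec
    have hd0 : H ⟨(j : ℕ) + 1, h⟩ ⟨(j : ℕ) + 1, h⟩ ≠ 0 := (hdiag _).ne'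
    have hcan : H ⟨(j : ℕ) + 1, h⟩ ⟨(j : ℕ) + 1, h⟩ *
        (-(H ⟨(j : ℕ) + 1, h⟩ j) / H ⟨(j : ℕ) + 1, h⟩ ⟨(j : ℕ) + 1, h⟩)
        = -(H ⟨(j : ℕ) + 1, h⟩ j) := by
      rw [mul_comm]; exact div_mul_cancel₀ _ hd0
    rw [hcan] at hrec
    linarith
  -- bullet 3
  have hband : ∀ i j : Fin n, ¬ ((i : ℕ) + 1 < (j : ℕ) ∨ (j : ℕ) + 1 < (i : ℕ)) →
      X⁻¹ i j = H i j := by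
    intro i j hij
    have hi := i.isLt
    have hjn := j.isLt
    have hcase : (i : ℕ) = (j : ℕ) ∨ (i : ℕ) = (j : ℕ) + 1 ∨ (j : ℕ) = (i : ℕ) + 1 := by omega
    rcases hcase with hc | hc | hc
    · have : i = j := Fin.ext hc
      subst this
      exact hdiagW (n - (i : ℕ) - 1) i (by omega)
    · have h : (j : ℕ) + 1 < n := by omega
      have : i = (⟨(j : ℕ) + 1, h⟩ : Fin n) := Fin.ext hc
      rw [this]
      exact hoffW j h
    · have h : (i : ℕ) + 1 < n := by omega
      have hj' : j = (⟨(i : ℕ) + 1, h⟩ : Fin n) := Fin.ext hc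
      have hs : H j i = H i j := by
        have := congrFun (congrFun hsym i) j
        simpa [Matrix.transpose_apply] using this
      rw [hWsym i j, hj', hoffW i h, ← hj', hs]
  refine ⟨hXpd, hXband, hband, ?_⟩
  -- bullet 4
  intro Y hY hYband hYne
  have htrYH' : (Y * H).trace = (Y * X⁻¹).trace :=
    aux_trace_band Y H X⁻¹ hYband (fun i j hij => (hband i j hij).symm)
  have htrXH : (X * H).trace = (n : ℝ) := by
    rw [aux_trace_band X H X⁻¹ hXband (fun i j hij => (hband i j hij).symm),
      Matrix.mul_nonsing_inv X hXdet, Matrix.trace_one]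
    simp
  rw [htrYH', htrXH]
  exact aux_logdet_lt hXpd hY hYne
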